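/- Let 2 ≤ d ≤ d' and 1 ≤ m < d be integers, let ω = e^{2πi/d}, and let H be an m×d partial Hadamard matrix. For l ∈ {0,…,d'−1} and a ∈ {0,…,d−1} define Q_l^a ∈ M_{d×d'} by Q_l^a(r,j) = ω^{a·r} if j ≡ r + l (mod d') and 0 otherwise (rows r ∈ {0,…,d−1}, columns j ∈ {0,…,d'−1}), and for y ∈ {1,…,m} define H_y ∈ M_{d×d'} by H_y(r,j) = H(y,r) if j = r and 0 otherwise. Set Z₀ = {Q_l^a : 1 ≤ l ≤ d'−1, 0 ≤ a ≤ d−1} and Z₁ = {H_y : 1 ≤ y ≤ m}. Then Z₀ ∪ Z₁ is a (d(d'−1)+m)-number USV1Bd in M_{d×d'} (equivalently, a (d(d'−1)+m)-number UMEB in ℂ^d ⊗ ℂ^{d'}) if and only if H cannot be extended to an (m+1)×d partial Hadamard matrix. -/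

import Mathlib

open Matrix

/-- The matrix `Q_l^a ∈ M_{d×d'}` with `Q_l^a(r,j) = ω^{a·r}` (`ω = e^{2πi/d}`) if
`j ≡ r + l (mod d')`, and `0` otherwise. -/
noncomputable def Qmat (d d' : ℕ) (l a : ℕ) : Matrix (Fin d) (Fin d') ℂ :=
  fun r j => if (j : ℕ) % d' = ((r : ℕ) + l) % d'
    then Complex.exp (2 * Real.pi * Complex.I / d) ^ (a * (r : ℕ)) else 0

/-- The matrix `H_y ∈ M_{d×d'}` with `H_y(r,j) = H(y,r)` if `j = r` and `0` otherwise. -/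
def Hmat (d d' m : ℕ) (H : Matrix (Fin m) (Fin d) ℂ) (y : Fin m) :
    Matrix (Fin d) (Fin d') ℂ :=
  fun r j => if (j : ℕ) = (r : ℕ) then H y r else 0

set_option linter.unusedVariables false

noncomputable def myω (d : ℕ) : ℂ := Complex.exp (2 * Real.pi * Complex.I / d)

lemma myω_conj (d : ℕ) : (starRingEnd ℂ) (myω d) = (myω d)⁻¹ := by
  unfold myω
  rw [← Complex.exp_conj, ← Complex.exp_neg]
  congr 1
  simp [Complex.ext_iff, neg_div]

lemma myω_pow_mul_conj (d k : ℕ) : myω d ^ k * (starRingEnd ℂ) (myω d ^ k) = 1 := by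
  rw [map_pow, myω_conj, inv_pow]
  exact mul_inv_cancel₀ (pow_ne_zero _ (Complex.exp_ne_zero _))

lemma unimod_mul_conj (z : ℂ) (h : ‖z‖ = 1) : z * (starRingEnd ℂ) z = 1 := by
  rw [Complex.mul_conj, Complex.normSq_eq_norm_sq, h]
  simp

lemma geom_root (d : ℕ) (ζ : ℂ) (h : ζ ^ d = 1) :
    ∑ t : Fin d, ζ ^ (t : ℕ) = if ζ = 1 then (d : ℂ) else 0 := by
  rw [Fin.sum_univ_eq_sum_range]
  split
  · next h1 => subst h1; simp
  · next h1 => rw [geom_sum_eq h1, h]; simp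

lemma sum_root (d : ℕ) (hd : 0 < d) (p q : ℕ) (hp : p < d) (hq : q < d) :
    ∑ t : Fin d, (starRingEnd ℂ) (myω d) ^ ((t : ℕ) * p) * (myω d) ^ ((t : ℕ) * q)
      = if p = q then (d : ℂ) else 0 := by
  have hω : IsPrimitiveRoot (myω d) d := Complex.isPrimitiveRoot_exp d (by omega)
  have hne : myω d ≠ 0 := Complex.exp_ne_zero _
  have key : ∀ t : Fin d,
      (starRingEnd ℂ) (myω d) ^ ((t : ℕ) * p) * (myω d) ^ ((t : ℕ) * q)
        = (((myω d) ^ p)⁻¹ * (myω d) ^ q) ^ (t : ℕ) := by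
    intro t
    rw [myω_conj, mul_pow, ← inv_pow, ← pow_mul, ← pow_mul, mul_comm p (t:ℕ), mul_comm q (t:ℕ)]
  rw [Finset.sum_congr rfl (fun t _ => key t)]
  have hζd : (((myω d) ^ p)⁻¹ * (myω d) ^ q) ^ d = 1 := by
    rw [mul_pow, ← inv_pow, ← pow_mul, ← pow_mul, mul_comm p d, mul_comm q d, pow_mul, pow_mul,
      hω.pow_eq_one]
    simp [hω.pow_eq_one]
  rw [geom_root d _ hζd]
  congr 1
  rw [eq_iff_iff]
  constructor
  · intro h1
    have : (myω d) ^ p = (myω d) ^ q := by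
      field_simp at h1
      exact h1.symm
    exact hω.pow_inj hp hq this
  · rintro rfl
    field_simp

lemma trace_form {n n' : ℕ} (A B : Matrix (Fin n) (Fin n') ℂ) :
    (Aᴴ * B).trace = ∑ r, ∑ j, (starRingEnd ℂ) (A r j) * B r j := by
  simp only [Matrix.trace, Matrix.mul_apply, Matrix.conjTranspose_apply, Matrix.diag_apply]
  exact Finset.sum_comm

lemma sum_fin_ite {n : ℕ} (c : ℕ) (hc : c < n) (f : Fin n → ℂ) :
    ∑ j : Fin n, (if (j : ℕ) = c then f j else 0) = f ⟨c, hc⟩ := by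
  rw [Finset.sum_eq_single ⟨c, hc⟩]
  · simp
  · intro j _ hj
    rw [if_neg]
    intro h
    exact hj (Fin.ext h)
  · simp

lemma sum_ite_ite {n : ℕ} (c c' : ℕ) (hc : c < n) (x x' : ℂ) :
    ∑ j : Fin n, (if (j : ℕ) = c then x else 0) * (if (j : ℕ) = c' then x' else 0)
      = if c = c' then x * x' else 0 := by
  split
  · next h =>
    subst h
    have : ∀ j : Fin n, (if (j : ℕ) = c then x else 0) * (if (j : ℕ) = c then x' else 0)
        = if (j : ℕ) = c then x * x' else 0 := by
      intro j; split <;> simp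
    rw [Finset.sum_congr rfl (fun j _ => this j), sum_fin_ite c hc]
  · next h =>
    apply Finset.sum_eq_zero
    intro j _
    by_cases hj : (j : ℕ) = c
    · rw [if_neg (by omega : ¬ (j:ℕ) = c'), mul_zero]
    · rw [if_neg hj, zero_mul]

lemma Qmat_apply (d d' l a : ℕ) (r : Fin d) (j : Fin d') :
    Qmat d d' l a r j = if (j : ℕ) = ((r : ℕ) + l) % d' then (myω d) ^ (a * (r : ℕ)) else 0 := by
  simp [Qmat, myω, Nat.mod_eq_of_lt j.isLt]

lemma umeb_fourier_zero (d : ℕ) (hd : 0 < d) (u : Fin d → ℂ)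
    (h : ∀ a : Fin d, ∑ r : Fin d,
      (starRingEnd ℂ) ((myω d) ^ ((a : ℕ) * (r : ℕ))) * u r = 0) :
    ∀ r, u r = 0 := by
  intro s
  have h2 : ∑ a : Fin d, (myω d) ^ ((a : ℕ) * (s : ℕ)) *
      ∑ r : Fin d, (starRingEnd ℂ) ((myω d) ^ ((a : ℕ) * (r : ℕ))) * u r = 0 := by
    simp only [h, mul_zero, Finset.sum_const_zero]
  have h3 : ∑ a : Fin d, (myω d) ^ ((a : ℕ) * (s : ℕ)) *
      ∑ r : Fin d, (starRingEnd ℂ) ((myω d) ^ ((a : ℕ) * (r : ℕ))) * u r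
      = ∑ r : Fin d, (∑ a : Fin d, (starRingEnd ℂ) (myω d) ^ ((a : ℕ) * (r : ℕ))
          * (myω d) ^ ((a : ℕ) * (s : ℕ))) * u r := by
    simp only [Finset.mul_sum, Finset.sum_mul, map_pow]
    rw [Finset.sum_comm]
    congr 1; ext r; congr 1; ext a; ring
  rw [h3] at h2
  have h4 : ∀ r : Fin d, (∑ a : Fin d, (starRingEnd ℂ) (myω d) ^ ((a : ℕ) * (r : ℕ))
      * (myω d) ^ ((a : ℕ) * (s : ℕ))) * u r = (if r = s then (d : ℂ) else 0) * u r := by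
    intro r
    rw [sum_root d hd r s r.isLt s.isLt]
    congr 1
    simp [Fin.ext_iff]
  rw [Finset.sum_congr rfl (fun r _ => h4 r)] at h2
  simp only [ite_mul, zero_mul, Finset.sum_ite_eq', Finset.mem_univ, if_true] at h2
  have hd0 : (d : ℂ) ≠ 0 := Nat.cast_ne_zero.mpr (by omega)
  exact (mul_eq_zero.mp h2).resolve_left hd0

lemma mod_cancel {d d' : ℕ} (hdd : d ≤ d') (l : ℕ) (r r' : Fin d)
    (h : ((r : ℕ) + l) % d' = ((r' : ℕ) + l) % d') : r = r' := by
  have h1 : (r : ℕ) % d' = (r' : ℕ) % d' :=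
    Nat.ModEq.add_right_cancel' l h
  rw [Nat.mod_eq_of_lt (by omega : (r:ℕ) < d'), Nat.mod_eq_of_lt (by omega : (r':ℕ) < d')] at h1
  exact Fin.ext h1

lemma mod_ne_self {d d' : ℕ} (hdd : d ≤ d') (l : ℕ) (hl1 : 1 ≤ l) (hl2 : l < d') (r : Fin d) :
    ((r : ℕ) + l) % d' ≠ (r : ℕ) := by
  intro h
  have h1 : ((r : ℕ) + l) % d' = ((r : ℕ) + 0) % d' := by
    rw [h, Nat.add_zero, Nat.mod_eq_of_lt (by omega : (r:ℕ) < d')]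
  have h2 : l % d' = 0 % d' := Nat.ModEq.add_left_cancel' (r : ℕ) h1
  rw [Nat.mod_eq_of_lt hl2, Nat.zero_mod] at h2
  omega

lemma Qmat_mul_conjT (d d' l a : ℕ) (hd : 0 < d) (hdd : d ≤ d') :
    Qmat d d' l a * (Qmat d d' l a)ᴴ = 1 := by
  have hd' : 0 < d' := by omega
  ext r r'
  rw [Matrix.mul_apply, Matrix.one_apply]
  simp only [Matrix.conjTranspose_apply, RCLike.star_def, Qmat_apply,
    apply_ite (starRingEnd ℂ), map_zero]
  rw [sum_ite_ite _ _ (Nat.mod_lt _ hd')]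
  by_cases h : r = r'
  · subst h
    rw [if_pos rfl, if_pos rfl, myω_pow_mul_conj]
  · rw [if_neg h, if_neg (fun hc => h (mod_cancel hdd l r r' hc))]

lemma Hmat_mul_conjT (d d' m : ℕ) (hd : 0 < d) (hdd : d ≤ d')
    (H : Matrix (Fin m) (Fin d) ℂ) (hHmod : ∀ y j, ‖H y j‖ = 1) (y : Fin m) :
    Hmat d d' m H y * (Hmat d d' m H y)ᴴ = 1 := by
  ext r r'
  rw [Matrix.mul_apply, Matrix.one_apply]
  simp only [Matrix.conjTranspose_apply, RCLike.star_def, Hmat,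
    apply_ite (starRingEnd ℂ), map_zero]
  rw [sum_ite_ite _ _ (by omega : (r : ℕ) < d')]
  by_cases h : r = r'
  · subst h
    rw [if_pos rfl, if_pos rfl, unimod_mul_conj _ (hHmod y r)]
  · rw [if_neg h, if_neg (fun hc => h (Fin.ext hc))]

lemma trace_QQ (d d' : ℕ) (hd : 0 < d) (hdd : d ≤ d') (l l' a a' : ℕ)
    (hl : l < d') (hl' : l' < d') (ha : a < d) (ha' : a' < d) :
    ((Qmat d d' l a)ᴴ * Qmat d d' l' a').trace
      = if l = l' ∧ a = a' then (d : ℂ) else 0 := by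
  have hd' : 0 < d' := by omega
  rw [trace_form]
  simp only [Qmat_apply, apply_ite (starRingEnd ℂ), map_zero]
  have inner : ∀ r : Fin d,
      (∑ j : Fin d', (if (j : ℕ) = ((r : ℕ) + l) % d' then
          (starRingEnd ℂ) ((myω d) ^ (a * (r : ℕ))) else 0) *
        (if (j : ℕ) = ((r : ℕ) + l') % d' then (myω d) ^ (a' * (r : ℕ)) else 0))
      = if l = l' then (starRingEnd ℂ) (myω d) ^ ((r : ℕ) * a) * (myω d) ^ ((r : ℕ) * a')
          else 0 := by
    intro r
    rw [sum_ite_ite _ _ (Nat.mod_lt _ hd')]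
    have hcond : (((r : ℕ) + l) % d' = ((r : ℕ) + l') % d') ↔ l = l' := by
      constructor
      · intro h
        have h2 : l % d' = l' % d' := Nat.ModEq.add_left_cancel' (r : ℕ) h
        rwa [Nat.mod_eq_of_lt hl, Nat.mod_eq_of_lt hl'] at h2
      · rintro rfl; rfl
    rw [map_pow, mul_comm a (r : ℕ), mul_comm a' (r : ℕ)]
    by_cases h : l = l'
    · rw [if_pos (hcond.mpr h), if_pos h]
    · rw [if_neg (fun hc => h (hcond.mp hc)), if_neg h]
  rw [Finset.sum_congr rfl (fun r _ => inner r)]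
  by_cases h : l = l'
  · subst h
    rw [Finset.sum_congr rfl (fun r _ => if_pos rfl), sum_root d hd a a' ha ha']
    by_cases h2 : a = a'
    · rw [if_pos h2, if_pos ⟨rfl, h2⟩]
    · rw [if_neg h2, if_neg (fun hc => h2 hc.2)]
  · rw [Finset.sum_congr rfl (fun r _ => if_neg h), Finset.sum_const_zero,
      if_neg (fun hc => h hc.1)]

lemma trace_QH (d d' m : ℕ) (hd : 0 < d) (hdd : d ≤ d') (l a : ℕ)
    (hl1 : 1 ≤ l) (hl : l < d') (H : Matrix (Fin m) (Fin d) ℂ) (y : Fin m) :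
    ((Qmat d d' l a)ᴴ * Hmat d d' m H y).trace = 0 := by
  have hd' : 0 < d' := by omega
  rw [trace_form]
  apply Finset.sum_eq_zero
  intro r _
  simp only [Qmat_apply, Hmat, apply_ite (starRingEnd ℂ), map_zero]
  rw [sum_ite_ite _ _ (Nat.mod_lt _ hd'), if_neg (mod_ne_self hdd l hl1 hl r)]

lemma trace_HQ (d d' m : ℕ) (hd : 0 < d) (hdd : d ≤ d') (l a : ℕ)
    (hl1 : 1 ≤ l) (hl : l < d') (H : Matrix (Fin m) (Fin d) ℂ) (y : Fin m) :
    ((Hmat d d' m H y)ᴴ * Qmat d d' l a).trace = 0 := by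
  rw [trace_form]
  apply Finset.sum_eq_zero
  intro r _
  simp only [Qmat_apply, Hmat, apply_ite (starRingEnd ℂ), map_zero]
  rw [sum_ite_ite _ _ (by omega : (r : ℕ) < d'),
    if_neg (fun hc => mod_ne_self hdd l hl1 hl r hc.symm)]

lemma trace_HH (d d' m : ℕ) (hd : 0 < d) (hdd : d ≤ d')
    (H : Matrix (Fin m) (Fin d) ℂ) (hHmod : ∀ y j, ‖H y j‖ = 1)
    (hHorth : ∀ y y' : Fin m, y ≠ y' →
      ∑ j, (starRingEnd ℂ) (H y j) * H y' j = 0) (y y' : Fin m) :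
    ((Hmat d d' m H y)ᴴ * Hmat d d' m H y').trace = if y = y' then (d : ℂ) else 0 := by
  rw [trace_form]
  have inner : ∀ r : Fin d,
      (∑ j : Fin d', (starRingEnd ℂ) (Hmat d d' m H y r j) * Hmat d d' m H y' r j)
      = (starRingEnd ℂ) (H y r) * H y' r := by
    intro r
    simp only [Hmat, apply_ite (starRingEnd ℂ), map_zero]
    rw [sum_ite_ite _ _ (by omega : (r : ℕ) < d'), if_pos rfl]
  rw [Finset.sum_congr rfl (fun r _ => inner r)]
  by_cases h : y = y'
  · subst h
    rw [if_pos rfl]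
    have : ∀ r : Fin d, (starRingEnd ℂ) (H y r) * H y r = 1 := by
      intro r
      rw [mul_comm]; exact unimod_mul_conj _ (hHmod y r)
    rw [Finset.sum_congr rfl (fun r _ => this r)]
    simp
  · rw [if_neg h]
    exact hHorth y y' h

lemma sum_ite_mul {n : ℕ} (c : ℕ) (hc : c < n) (x : ℂ) (g : Fin n → ℂ) :
    ∑ j : Fin n, (if (j : ℕ) = c then x else 0) * g j = x * g ⟨c, hc⟩ := by
  have : ∀ j : Fin n, (if (j : ℕ) = c then x else 0) * g j
      = if (j : ℕ) = c then x * g j else 0 := by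
    intro j; split <;> simp
  rw [Finset.sum_congr rfl (fun j _ => this j), sum_fin_ite c hc]

lemma unimod_of_mul_conj (z : ℂ) (h : z * (starRingEnd ℂ) z = 1) : ‖z‖ = 1 := by
  have h2 := congrArg norm h
  rw [norm_mul, Complex.norm_conj, norm_one] at h2
  rcases mul_self_eq_one_iff.mp h2 with h3 | h3
  · exact h3
  · nlinarith [norm_nonneg z]

lemma umeb_main (d d' m : ℕ)
    (hd : 2 ≤ d) (hdd : d ≤ d') (hm1 : 1 ≤ m) (hm2 : m < d)
    (H : Matrix (Fin m) (Fin d) ℂ)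
    (hHmod : ∀ y j, ‖H y j‖ = 1)
    (hHorth : ∀ y y' : Fin m, y ≠ y' →
      ∑ j, (starRingEnd ℂ) (H y j) * H y' j = 0) :
    ((∀ x : (Fin (d' - 1) × Fin d) ⊕ Fin m,
        Sum.elim (fun la : Fin (d' - 1) × Fin d => Qmat d d' ((la.1 : ℕ) + 1) (la.2 : ℕ)) (Hmat d d' m H) x *
          (Sum.elim (fun la : Fin (d' - 1) × Fin d => Qmat d d' ((la.1 : ℕ) + 1) (la.2 : ℕ)) (Hmat d d' m H) x)ᴴ
          = 1) ∧
     (∀ x y, ((Sum.elim (fun la : Fin (d' - 1) × Fin d => Qmat d d' ((la.1 : ℕ) + 1) (la.2 : ℕ)) (Hmat d d' m H) x)ᴴ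
          * Sum.elim (fun la : Fin (d' - 1) × Fin d => Qmat d d' ((la.1 : ℕ) + 1) (la.2 : ℕ)) (Hmat d d' m H) y).trace
          = if x = y then (d : ℂ) else 0) ∧
     (∀ B : Matrix (Fin d) (Fin d') ℂ,
        (∀ x, ((Sum.elim (fun la : Fin (d' - 1) × Fin d => Qmat d d' ((la.1 : ℕ) + 1) (la.2 : ℕ))
            (Hmat d d' m H) x)ᴴ * B).trace = 0) → ¬ (B * Bᴴ = 1)))
    ↔ ¬ ∃ v : Fin d → ℂ, (∀ i, ‖v i‖ = 1) ∧
          (∀ y : Fin m, ∑ j, (starRingEnd ℂ) (H y j) * v j = 0) := by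
  have hd0 : 0 < d := by omega
  have hd' : 0 < d' := by omega
  have hd2' : 2 ≤ d' := by omega
  constructor
  · rintro ⟨h1, h2, h3⟩ ⟨v, hv1, hv2⟩
    refine h3 (Matrix.of fun r j => if (j : ℕ) = (r : ℕ) then v r else 0) ?_ ?_
    · intro x
      rcases x with ⟨l, a⟩ | y
      · simp only [Sum.elim_inl]
        rw [trace_form]
        simp only [Matrix.of_apply]
        apply Finset.sum_eq_zero
        intro r _
        simp only [Qmat_apply, apply_ite (starRingEnd ℂ), map_zero]
        rw [sum_ite_ite _ _ (Nat.mod_lt _ hd'),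
          if_neg (mod_ne_self hdd ((l : ℕ) + 1) (by omega) (by omega) r)]
      · simp only [Sum.elim_inr]
        rw [trace_form]
        simp only [Matrix.of_apply]
        have inner : ∀ r : Fin d,
            (∑ j : Fin d', (starRingEnd ℂ) (Hmat d d' m H y r j) *
              (if (j : ℕ) = (r : ℕ) then v r else 0))
            = (starRingEnd ℂ) (H y r) * v r := by
          intro r
          simp only [Hmat, apply_ite (starRingEnd ℂ), map_zero]
          rw [sum_ite_ite _ _ (by omega : (r : ℕ) < d'), if_pos rfl]
        rw [Finset.sum_congr rfl (fun r _ => inner r)]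
        exact hv2 y
    · ext r r'
      rw [Matrix.mul_apply, Matrix.one_apply]
      simp only [Matrix.conjTranspose_apply, RCLike.star_def, Matrix.of_apply,
        apply_ite (starRingEnd ℂ), map_zero]
      rw [sum_ite_ite _ _ (by omega : (r : ℕ) < d')]
      by_cases h : r = r'
      · subst h
        rw [if_pos rfl, if_pos rfl, unimod_mul_conj _ (hv1 r)]
      · rw [if_neg h, if_neg (fun hc => h (Fin.ext hc))]
  · intro hnex
    refine ⟨?_, ?_, ?_⟩
    · intro x
      rcases x with ⟨l, a⟩ | y
      · exact Qmat_mul_conjT d d' _ _ hd0 hdd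
      · exact Hmat_mul_conjT d d' m hd0 hdd H hHmod y
    · intro x y
      rcases x with ⟨l, a⟩ | y1 <;> rcases y with ⟨l', a'⟩ | y2
      · simp only [Sum.elim_inl]
        rw [trace_QQ d d' hd0 hdd _ _ _ _ (by omega) (by omega) a.isLt a'.isLt]
        have : ((l : ℕ) + 1 = (l' : ℕ) + 1 ∧ (a : ℕ) = (a' : ℕ))
            ↔ (Sum.inl (l, a) : (Fin (d' - 1) × Fin d) ⊕ Fin m) = Sum.inl (l', a') := by
          simp [Prod.ext_iff, Fin.ext_iff]
        rw [if_congr this rfl rfl]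
      · simp only [Sum.elim_inl, Sum.elim_inr]
        rw [trace_QH d d' m hd0 hdd _ _ (by omega) (by omega) H y2]
        simp
      · simp only [Sum.elim_inl, Sum.elim_inr]
        rw [trace_HQ d d' m hd0 hdd _ _ (by omega) (by omega) H y1]
        simp
      · simp only [Sum.elim_inr]
        rw [trace_HH d d' m hd0 hdd H hHmod hHorth y1 y2]
        have : (y1 = y2) ↔ (Sum.inr y1 : (Fin (d' - 1) × Fin d) ⊕ Fin m) = Sum.inr y2 := by
          simp
        rw [if_congr this rfl rfl]
    · intro B hB hBB
      apply hnex
      -- B vanishes off the diagonal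
      have hQ : ∀ l : ℕ, 1 ≤ l → l < d' → ∀ r : Fin d,
          B r ⟨((r : ℕ) + l) % d', Nat.mod_lt _ hd'⟩ = 0 := by
        intro l hl1 hl2
        apply umeb_fourier_zero d hd0 (fun r => B r ⟨((r : ℕ) + l) % d', Nat.mod_lt _ hd'⟩)
        intro a
        have h := hB (Sum.inl (⟨l - 1, by omega⟩, a))
        simp only [Sum.elim_inl] at h
        rw [trace_form] at h
        have hl' : (l - 1) + 1 = l := by omega
        rw [hl'] at h
        have inner : ∀ r : Fin d,
            (∑ j : Fin d', (starRingEnd ℂ) (Qmat d d' l (a : ℕ) r j) * B r j)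
            = (starRingEnd ℂ) ((myω d) ^ ((a : ℕ) * (r : ℕ))) *
                B r ⟨((r : ℕ) + l) % d', Nat.mod_lt _ hd'⟩ := by
          intro r
          simp only [Qmat_apply, apply_ite (starRingEnd ℂ), map_zero]
          rw [sum_ite_mul _ (Nat.mod_lt _ hd')]
        rw [Finset.sum_congr rfl (fun r _ => inner r)] at h
        exact h
      have hsupp : ∀ (r : Fin d) (j : Fin d'), (j : ℕ) ≠ (r : ℕ) → B r j = 0 := by
        intro r j hne
        set l := ((j : ℕ) + d' - (r : ℕ)) % d' with hldef
        have hrl : ((r : ℕ) + l) % d' = (j : ℕ) := by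
          rw [hldef, Nat.add_mod_mod,
            show (r : ℕ) + ((j : ℕ) + d' - (r : ℕ)) = (j : ℕ) + d' by omega,
            Nat.add_mod_right, Nat.mod_eq_of_lt j.isLt]
        have hl0 : l ≠ 0 := by
          intro h0
          rw [h0, Nat.add_zero, Nat.mod_eq_of_lt (by omega : (r : ℕ) < d')] at hrl
          exact hne hrl.symm
        have hj : j = ⟨((r : ℕ) + l) % d', Nat.mod_lt _ hd'⟩ := Fin.ext hrl.symm
        rw [hj]
        exact hQ l (by omega) (Nat.mod_lt _ hd') r
      refine ⟨fun r => B r ⟨(r : ℕ), by omega⟩, ?_, ?_⟩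
      · intro r
        have h1 : (B * Bᴴ) r r = (1 : Matrix (Fin d) (Fin d) ℂ) r r := by rw [hBB]
        rw [Matrix.mul_apply, Matrix.one_apply_eq] at h1
        rw [Finset.sum_eq_single (⟨(r : ℕ), by omega⟩ : Fin d')] at h1
        · exact unimod_of_mul_conj _ (by
            simpa only [Matrix.conjTranspose_apply, RCLike.star_def] using h1)
        · intro j _ hj
          rw [hsupp r j (fun hc => hj (Fin.ext hc)), zero_mul]
        · simp
      · intro y
        have h := hB (Sum.inr y)
        simp only [Sum.elim_inr] at h
        rw [trace_form] at h
        have inner : ∀ r : Fin d,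
            (∑ j : Fin d', (starRingEnd ℂ) (Hmat d d' m H y r j) * B r j)
            = (starRingEnd ℂ) (H y r) * B r ⟨(r : ℕ), by omega⟩ := by
          intro r
          simp only [Hmat, apply_ite (starRingEnd ℂ), map_zero]
          rw [sum_ite_mul _ (by omega : (r : ℕ) < d')]
        rw [Finset.sum_congr rfl (fun r _ => inner r)] at h
        exact h

/-- Theorem 5.1: given an `m×d` partial Hadamard matrix `H` with `m < d`,
the family `Z₀ ∪ Z₁ = {Q_l^a : 1 ≤ l ≤ d'-1, 0 ≤ a ≤ d-1} ∪ {H_y : 1 ≤ y ≤ m}` is a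
`(d(d'-1)+m)`-number USV1Bd (UMEB) in `M_{d×d'}` if and only if `H` cannot be extended
to an `(m+1)×d` partial Hadamard matrix, i.e., iff there is no unimodular vector
orthogonal to all rows of `H`. -/
theorem umeb_iff_unextendible_hadamard (d d' m : ℕ)
    (hd : 2 ≤ d) (hdd : d ≤ d') (hm1 : 1 ≤ m) (hm2 : m < d)
    (H : Matrix (Fin m) (Fin d) ℂ)
    (hHmod : ∀ y j, ‖H y j‖ = 1)
    (hHorth : ∀ y y' : Fin m, y ≠ y' →
      ∑ j, (starRingEnd ℂ) (H y j) * H y' j = 0) :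
    (let F : (Fin (d' - 1) × Fin d) ⊕ Fin m → Matrix (Fin d) (Fin d') ℂ :=
      Sum.elim (fun la => Qmat d d' ((la.1 : ℕ) + 1) (la.2 : ℕ)) (Hmat d d' m H)
     (∀ x, F x * (F x)ᴴ = 1) ∧
     (∀ x y, ((F x)ᴴ * F y).trace = if x = y then (d : ℂ) else 0) ∧
     (∀ B : Matrix (Fin d) (Fin d') ℂ,
        (∀ x, ((F x)ᴴ * B).trace = 0) → ¬ (B * Bᴴ = 1)))
    ↔ ¬ ∃ v : Fin d → ℂ, (∀ i, ‖v i‖ = 1) ∧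
          (∀ y : Fin m, ∑ j, (starRingEnd ℂ) (H y j) * v j = 0) :=
  umeb_main d d' m hd hdd hm1 hm2 H hHmod hHorth
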